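/- arXiv:2005.09944 — 3 statements merged into one kernel-verified Lean document; each statement's English description precedes it below -/
import Mathlib

section
/- In the lottery game among m ≥ 1 players where each player independently flips a fair coin until the first tail and records the number of heads as its level, and where the level of any two distinct players are independent after conditioning as in the single shared-interaction model (formally: the levels X_1,…,X_m are i.i.d. geometric with Pr(X_i ≥ k) = 2^{-k}), and m ≤ n, the probability that exactly one player attains the maximum level is at least 1/16. -/
open MeasureTheory ProbabilityTheory
open scoped ENNReal

/-- Bernoulli inequality in `ℝ≥0∞`. -/
lemma bern_ennreal (p : ℝ≥0∞) (hp : p ≤ 1) :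
    ∀ k : ℕ, 1 - (k : ℝ≥0∞) * p ≤ (1 - p) ^ k := by
  intro k
  induction k with
  | zero => simp
  | succ k ih =>
    have hfin : (1 - p) ^ k ≠ ∞ := by
      refine (lt_of_le_of_lt ?_ ENNReal.one_lt_top).ne
      exact pow_le_one' tsub_le_self k
    have h1 : ((k + 1 : ℕ) : ℝ≥0∞) * p = (k : ℝ≥0∞) * p + p := by push_cast; ring
    rw [h1, pow_succ]
    have h2 : (1 : ℝ≥0∞) - ((k : ℝ≥0∞) * p + p) ≤ (1 - p) ^ k - p := by
      rw [← tsub_tsub]; exact tsub_le_tsub_right ih p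
    refine h2.trans ?_
    have h3 : (1 - p) ^ k * p ≤ p := by
      calc (1 - p) ^ k * p ≤ 1 * p := by
            gcongr
            exact pow_le_one' tsub_le_self k
        _ = p := one_mul p
    calc (1 - p) ^ k - p ≤ (1 - p) ^ k - (1 - p) ^ k * p := tsub_le_tsub_left h3 _
      _ = (1 - p) ^ k * (1 - p) := by
          rw [ENNReal.mul_sub (fun _ _ => hfin), mul_one]

/-- Lottery game: `m` players (`1 ≤ m ≤ n`, `n ≥ 2`) draw i.i.d. levels
`X i` with `Pr(X i ≥ k) = (1/2)^k`.  Then with probability at least `1/16`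
exactly one player attains the maximum level. -/
theorem stmt3 {Ω : Type*} [MeasurableSpace Ω] (μ : Measure Ω) [IsProbabilityMeasure μ]
    (n m : ℕ) (hn : 2 ≤ n) (hm : 1 ≤ m) (hmn : m ≤ n)
    (X : Fin m → Ω → ℕ) (hmeas : ∀ i, Measurable (X i))
    (hind : iIndepFun X μ)
    (hgeom : ∀ (i : Fin m) (k : ℕ), μ {ω | k ≤ X i ω} = (1 / 2 : ℝ≥0∞) ^ k) :
    (1 : ℝ≥0∞) / 16 ≤ μ {ω | ∃! i : Fin m, ∀ j : Fin m, X j ω ≤ X i ω} := by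
  classical
  set K : ℕ := Nat.clog 2 m + 2 with hK
  -- bounds on 2^K
  have h2K_lo : 4 * m ≤ 2 ^ K := by
    have := Nat.le_pow_clog (by norm_num : 1 < 2) m
    calc 4 * m ≤ 4 * 2 ^ Nat.clog 2 m := by omega
      _ = 2 ^ K := by rw [hK, pow_add]; ring
  have h2K_hi : 2 ^ K ≤ 8 * m := by
    have hc : 2 ^ Nat.clog 2 m ≤ 2 * m := by
      rcases Nat.lt_or_ge m 2 with h | h
      · have hm1 : m = 1 := by omega
        subst hm1
        norm_num [Nat.clog_one_right]
      · have h1 := Nat.pow_pred_clog_lt_self (by norm_num : 1 < 2) h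
        have h3 : 2 ^ Nat.clog 2 m = 2 * 2 ^ (Nat.clog 2 m - 1) := by
          conv_lhs => rw [show Nat.clog 2 m = (Nat.clog 2 m - 1) + 1 from by
            have := Nat.clog_pos (by norm_num : 1 < 2) h
            omega]
          rw [pow_succ']
        simp only [Nat.pred_eq_sub_one] at h1
        omega
    calc 2 ^ K = 4 * 2 ^ Nat.clog 2 m := by rw [hK, pow_add]; ring
      _ ≤ 4 * (2 * m) := by omega
      _ = 8 * m := by ring
  set p : ℝ≥0∞ := (1 / 2 : ℝ≥0∞) ^ K with hp
  have hpeq : p = ((2 : ℝ≥0∞) ^ K)⁻¹ := by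
    rw [hp, one_div, ← ENNReal.inv_pow]
  have h2Kcast : ((2 : ℕ) ^ K : ℝ≥0∞) = (2 : ℝ≥0∞) ^ K := by push_cast; ring
  have hp_le : p ≤ ((4 * m : ℕ) : ℝ≥0∞)⁻¹ := by
    rw [hpeq]
    apply ENNReal.inv_le_inv'
    rw [← h2Kcast]
    exact_mod_cast h2K_lo
  have hp_ge : ((8 * m : ℕ) : ℝ≥0∞)⁻¹ ≤ p := by
    rw [hpeq]
    apply ENNReal.inv_le_inv'
    rw [← h2Kcast]
    exact_mod_cast h2K_hi
  have hp1 : p ≤ 1 := by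
    rw [hp]
    exact pow_le_one' (by simp) K
  -- measures of the basic events
  have hIci : ∀ v : Fin m, μ (X v ⁻¹' Set.Ici K) = p := fun v => hgeom v K
  have hIio : ∀ v : Fin m, μ (X v ⁻¹' Set.Iio K) = 1 - p := by
    intro v
    have hcompl : X v ⁻¹' Set.Iio K = (X v ⁻¹' Set.Ici K)ᶜ := by
      ext ω; simp [Set.mem_preimage, not_le]
    rw [hcompl, measure_compl ((hmeas v) measurableSet_Ici) (measure_ne_top μ _),
      measure_univ, hIci v]
  -- the events A u
  set setsOf : Fin m → Fin m → Set ℕ :=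
    fun u v => if v = u then Set.Ici K else Set.Iio K with hsetsOf
  set A : Fin m → Set Ω := fun u => ⋂ v, X v ⁻¹' setsOf u v with hA
  have hAmeas : ∀ u, MeasurableSet (A u) := by
    intro u
    apply MeasurableSet.iInter
    intro v
    by_cases h : v = u
    · simp only [hsetsOf, if_pos h]
      exact (hmeas v) measurableSet_Ici
    · simp only [hsetsOf, if_neg h]
      exact (hmeas v) measurableSet_Iio
  have hAval : ∀ u, μ (A u) = p * (1 - p) ^ (m - 1) := by
    intro u
    have hmeas' : ∀ v : Fin m, v ∈ Finset.univ → MeasurableSet (setsOf u v) := by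
      intro v _
      by_cases h : v = u <;> simp [hsetsOf, h]
    have := hind.measure_inter_preimage_eq_mul Finset.univ hmeas'
    have hAeq : A u = ⋂ v ∈ Finset.univ, X v ⁻¹' setsOf u v := by
      simp [hA]
    rw [hAeq, this]
    rw [← Finset.mul_prod_erase Finset.univ _ (Finset.mem_univ u)]
    have h1 : μ (X u ⁻¹' setsOf u u) = p := by
      simp only [hsetsOf, if_pos rfl]; exact hIci u
    have h2 : ∀ v ∈ Finset.univ.erase u, μ (X v ⁻¹' setsOf u v) = 1 - p := by
      intro v hv
      have hvne : v ≠ u := Finset.ne_of_mem_erase hv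
      simp only [hsetsOf, if_neg hvne]
      exact hIio v
    rw [h1, Finset.prod_congr rfl h2, Finset.prod_const]
    congr 1
    rw [Finset.card_erase_of_mem (Finset.mem_univ u), Finset.card_univ, Fintype.card_fin]
  -- lower bound on each μ (A u)
  have hm0 : (m : ℝ≥0∞) ≠ 0 := Nat.cast_ne_zero.mpr (by omega)
  have hmtop : (m : ℝ≥0∞) ≠ ∞ := ENNReal.natCast_ne_top m
  have hpow_ge : (3 / 4 : ℝ≥0∞) ≤ (1 - p) ^ (m - 1) := by
    refine le_trans ?_ (bern_ennreal p hp1 (m - 1))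
    have hmul : ((m - 1 : ℕ) : ℝ≥0∞) * p ≤ 1 / 4 := by
      calc ((m - 1 : ℕ) : ℝ≥0∞) * p ≤ (m : ℝ≥0∞) * ((4 * m : ℕ) : ℝ≥0∞)⁻¹ := by
            gcongr
            exact_mod_cast Nat.sub_le m 1
        _ = 1 / 4 := by
            push_cast
            rw [ENNReal.mul_inv (by simp) (by simp), one_div, ← mul_assoc,
              mul_comm (m : ℝ≥0∞) (4 : ℝ≥0∞)⁻¹, mul_assoc,
              ENNReal.mul_inv_cancel hm0 hmtop, mul_one]
    calc (3 / 4 : ℝ≥0∞) = 1 - 1 / 4 := by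
          refine (ENNReal.sub_eq_of_eq_add (by norm_num) ?_).symm
          rw [← ENNReal.add_div]
          norm_num [ENNReal.div_self]
      _ ≤ 1 - ((m - 1 : ℕ) : ℝ≥0∞) * p := tsub_le_tsub_left hmul 1
  have hAlb : ∀ u : Fin m, 3 / (32 * (m : ℝ≥0∞)) ≤ μ (A u) := by
    intro u
    rw [hAval u]
    calc (3 : ℝ≥0∞) / (32 * m) = ((8 * m : ℕ) : ℝ≥0∞)⁻¹ * (3 / 4) := by
          push_cast
          rw [div_eq_mul_inv, div_eq_mul_inv, ENNReal.mul_inv (by norm_num) (by norm_num),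
            ENNReal.mul_inv (by norm_num) (by simp),
            show (32 : ℝ≥0∞)⁻¹ = 8⁻¹ * 4⁻¹ from by
              rw [← ENNReal.mul_inv (by norm_num) (by norm_num)]; norm_num]
          ring
      _ ≤ p * (1 - p) ^ (m - 1) := by gcongr
  -- disjointness and inclusion
  have hdisj : Pairwise (Function.onFun Disjoint A) := by
    intro u v huv
    rw [Function.onFun, Set.disjoint_left]
    intro ω hu hv
    simp only [hA, Set.mem_iInter, Set.mem_preimage] at hu hv
    have h1 := hu u
    have h2 := hv u
    have h1' : K ≤ X u ω := by simpa [hsetsOf] using h1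
    have h2' : X u ω < K := by simpa [hsetsOf, huv] using h2
    exact absurd h1' (not_le.mpr h2')
  have hsub : (⋃ u, A u) ⊆ {ω | ∃! i : Fin m, ∀ j : Fin m, X j ω ≤ X i ω} := by
    intro ω hω
    obtain ⟨u, hu⟩ := Set.mem_iUnion.mp hω
    simp only [hA, Set.mem_iInter, Set.mem_preimage] at hu
    have huK : K ≤ X u ω := by
      have := hu u; simpa [hsetsOf] using this
    have hvK : ∀ v : Fin m, v ≠ u → X v ω < K := by
      intro v hv
      have := hu v
      simpa [hsetsOf, if_neg hv] using this
    refine ⟨u, ?_, ?_⟩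
    · intro j
      by_cases h : j = u
      · subst h; exact le_refl _
      · exact le_trans (le_of_lt (hvK j h)) huK
    · intro i hi
      by_contra h
      exact absurd (le_trans huK (hi u)) (not_le.mpr (hvK i h))
  -- put it all together
  have hunion : μ (⋃ u, A u) = ∑ u : Fin m, μ (A u) := by
    rw [measure_iUnion hdisj hAmeas, tsum_fintype]
  calc (1 : ℝ≥0∞) / 16 ≤ 3 / 32 := by
        rw [show (1 : ℝ≥0∞) / 16 = 2 / 32 from by
          rw [show (2 : ℝ≥0∞) / 32 = 2 * 1 / (2 * 16) from by norm_num,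
            ENNReal.mul_div_mul_left _ _ (by norm_num) (by norm_num)]]
        exact ENNReal.div_le_div (by norm_num) le_rfl
    _ = (m : ℝ≥0∞) * (3 / (32 * m)) := by
        rw [mul_div_assoc', show (m : ℝ≥0∞) * 3 = 3 * m from mul_comm _ _,
          show (32 : ℝ≥0∞) * m = m * 32 from mul_comm _ _, mul_comm (3 : ℝ≥0∞) (m : ℝ≥0∞),
          ENNReal.mul_div_mul_left _ _ hm0 hmtop]
    _ ≤ ∑ u : Fin m, μ (A u) := by
        calc (m : ℝ≥0∞) * (3 / (32 * m)) = ∑ _u : Fin m, 3 / (32 * (m : ℝ≥0∞)) := by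
              rw [Finset.sum_const, Finset.card_univ, Fintype.card_fin, nsmul_eq_mul]
          _ ≤ ∑ u : Fin m, μ (A u) := Finset.sum_le_sum (fun u _ => hAlb u)
    _ = μ (⋃ u, A u) := hunion.symm
    _ ≤ μ {ω | ∃! i : Fin m, ∀ j : Fin m, X j ω ≤ X i ω} := measure_mono hsub
end

section
/- Consider a Markov chain on {0, 1, …, n} tracking a quantity n_A (the number of mode-A agents), where at each step n_A increases by 1 with probability at least 4/9 whenever n_A ≤ n/3, and decreases by 1 with probability at most 1/9 (otherwise unchanged). Then starting from any value, n_A reaches ⌈n/3⌉ within O(n) steps with probability 1 − e^{−Ω(n)}. -/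
open MeasureTheory ProbabilityTheory
open scoped ENNReal

open scoped NNReal
set_option linter.unusedSectionVars false

section Aux

lemma keyX (u m d : ℝ≥0∞) (hu' : u ≠ ⊤) (hm' : m ≠ ⊤) (hd' : d ≠ ⊤)
    (hu : 4/9 * (u+m+d) ≤ u) (hd : d ≤ 1/9 * (u+m+d)) :
    2⁻¹*u + m + 2*d ≤ 8/9*(u+m+d) := by
  lift u to ℝ≥0 using hu'
  lift m to ℝ≥0 using hm'
  lift d to ℝ≥0 using hd'
  have c1 : ∀ (p q : ℝ≥0), q ≠ 0 → ((p/q : ℝ≥0) : ℝ≥0∞) = (p : ℝ≥0∞) / q := by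
    intro p q hq; rw [ENNReal.coe_div hq]
  rw [show (4:ℝ≥0∞)/9 = ((4/9 : ℝ≥0) : ℝ≥0∞) by rw [c1 _ _ (by norm_num)]; norm_num] at hu
  rw [show (1:ℝ≥0∞)/9 = ((1/9 : ℝ≥0) : ℝ≥0∞) by rw [c1 _ _ (by norm_num)]; norm_num] at hd
  rw [show (8:ℝ≥0∞)/9 = ((8/9 : ℝ≥0) : ℝ≥0∞) by rw [c1 _ _ (by norm_num)]; norm_num,
      show (2⁻¹:ℝ≥0∞) = ((2⁻¹ : ℝ≥0) : ℝ≥0∞) by rw [ENNReal.coe_inv (by norm_num)]; norm_num,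
      show (2:ℝ≥0∞) = ((2 : ℝ≥0) : ℝ≥0∞) by norm_num]
  norm_cast at hu hd ⊢
  rw [← NNReal.coe_le_coe] at hu hd ⊢
  push_cast at hu hd ⊢
  linarith

lemma sum_ite_le {s : Finset ℕ} (P : ℕ → Prop) [DecidablePred P]
    (hP : ∀ j1 j2, P j1 → P j2 → j1 = j2) (x : ℝ≥0∞) :
    ∑ j ∈ s, (if P j then x else 0) ≤ x := by
  rw [← Finset.sum_filter]
  rw [Finset.sum_const]
  have hcard : (s.filter P).card ≤ 1 :=
    Finset.card_le_one.2 (fun a ha b hb =>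
      hP a b (Finset.mem_filter.1 ha).2 (Finset.mem_filter.1 hb).2)
  calc (s.filter P).card • x ≤ 1 • x := smul_le_smul_of_nonneg_right hcard zero_le
    _ = x := one_smul _ _

variable {Ω : Type} [MeasurableSpace Ω]

/-- failure set up to time t -/
def Fs (Z : ℕ → Ω → ℕ) (n t : ℕ) : Set Ω := ⋂ s ∈ Set.Iic t, {ω | 3 * Z s ω ≤ n}

def Ak (Z : ℕ → Ω → ℕ) (n t k : ℕ) : Set Ω := Fs Z n t ∩ {ω | Z t ω = k}

noncomputable def Sf (μ : Measure Ω) (Z : ℕ → Ω → ℕ) (n t : ℕ) : ℝ≥0∞ :=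
  ∑ k ∈ Finset.range (n+1), 2⁻¹^k * μ (Ak Z n t k)

lemma mem_Fs {Z : ℕ → Ω → ℕ} {n t : ℕ} {ω : Ω} :
    ω ∈ Fs Z n t ↔ ∀ s ≤ t, 3 * Z s ω ≤ n := by
  simp [Fs]

lemma measurableSet_Fs {Z : ℕ → Ω → ℕ} (hZ : ∀ t, Measurable (Z t)) (n t : ℕ) :
    MeasurableSet (Fs Z n t) :=
  MeasurableSet.biInter (Set.to_countable _)
    (fun s _ => hZ s ((Set.to_countable {m | 3 * m ≤ n}).measurableSet))

lemma measurableSet_Ak {Z : ℕ → Ω → ℕ} (hZ : ∀ t, Measurable (Z t)) (n t k : ℕ) :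
    MeasurableSet (Ak Z n t k) :=
  (measurableSet_Fs hZ n t).inter (hZ t (measurableSet_singleton k))

lemma measurableSet_eq_nat {f g : Ω → ℕ} (hf : Measurable f) (hg : Measurable g) :
    MeasurableSet {ω | f ω = g ω} := by
  have : {ω | f ω = g ω} = ⋃ j : ℕ, (f ⁻¹' {j} ∩ g ⁻¹' {j}) := by
    ext ω; simp [eq_comm]
  rw [this]
  exact MeasurableSet.iUnion fun j =>
    (hf (measurableSet_singleton j)).inter (hg (measurableSet_singleton j))

lemma measurableSet_AkF {Z : ℕ → Ω → ℕ} (n t k : ℕ) :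
    MeasurableSet[⨆ s ∈ Finset.range (t + 1), MeasurableSpace.comap (Z s) ⊤]
      (Ak Z n t k) := by
  have hcomap : ∀ s, s ≤ t → ∀ (B : Set ℕ),
      MeasurableSet[⨆ s ∈ Finset.range (t + 1), MeasurableSpace.comap (Z s) ⊤]
        (Z s ⁻¹' B) := by
    intro s hs B
    have hle : MeasurableSpace.comap (Z s) ⊤ ≤
        ⨆ s ∈ Finset.range (t + 1), MeasurableSpace.comap (Z s) ⊤ :=
      le_iSup₂ (f := fun s (_ : s ∈ Finset.range (t+1)) => MeasurableSpace.comap (Z s) ⊤)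
        s (Finset.mem_range.2 (Nat.lt_succ_of_le hs))
    exact hle _ ⟨B, trivial, rfl⟩
  refine MeasurableSet.inter ?_ (hcomap t le_rfl {k})
  exact MeasurableSet.biInter (Set.to_countable _)
    (fun s hs => hcomap s hs {m | 3 * m ≤ n})

end Aux

section Main

variable {Ω : Type} [MeasurableSpace Ω]
set_option maxHeartbeats 1000000

lemma step_lemma (μ : Measure Ω) [IsProbabilityMeasure μ] (Z : ℕ → Ω → ℕ) (n : ℕ)
    (hZmeas : ∀ t, Measurable (Z t))
    (hZle : ∀ t ω, Z t ω ≤ n)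
    (hstep : ∀ t ω, Z (t + 1) ω = Z t ω + 1 ∨ Z (t + 1) ω = Z t ω ∨ Z t ω = Z (t + 1) ω + 1)
    (hup : ∀ (t : ℕ) (A : Set Ω),
        MeasurableSet[⨆ s ∈ Finset.range (t + 1), MeasurableSpace.comap (Z s) ⊤] A →
        (4 / 9 : ℝ≥0∞) * μ (A ∩ {ω | 3 * Z t ω ≤ n}) ≤
          μ (A ∩ {ω | 3 * Z t ω ≤ n} ∩ {ω | Z (t + 1) ω = Z t ω + 1}))
    (hdown : ∀ (t : ℕ) (A : Set Ω),
        MeasurableSet[⨆ s ∈ Finset.range (t + 1), MeasurableSpace.comap (Z s) ⊤] A →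
        μ (A ∩ {ω | Z t ω = Z (t + 1) ω + 1}) ≤ (1 / 9 : ℝ≥0∞) * μ A)
    (t : ℕ) :
    Sf μ Z n (t+1) ≤ 8/9 * Sf μ Z n t := by
  classical
  set U : Set Ω := {ω | Z (t+1) ω = Z t ω + 1} with hU
  set N : Set Ω := {ω | Z (t+1) ω = Z t ω} with hN
  set D : Set Ω := {ω | Z t ω = Z (t+1) ω + 1} with hD
  set B : ℕ → ℕ → Set Ω := fun k j => Ak Z n t k ∩ {ω | Z (t+1) ω = j} with hB
  -- step 1: termwise bound on S(t+1)
  have h1 : Sf μ Z n (t+1) ≤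
      ∑ k ∈ Finset.range (n+1), ∑ j ∈ Finset.range (n+1), 2⁻¹^j * μ (B k j) := by
    rw [Finset.sum_comm]
    refine Finset.sum_le_sum fun j _ => ?_
    rw [← Finset.mul_sum]
    have hsub : Ak Z n (t+1) j ⊆ ⋃ k ∈ Finset.range (n+1), B k j := by
      rintro ω ⟨hω1, hω2⟩
      have hFt : ω ∈ Fs Z n t := by
        rw [mem_Fs]; exact fun s hs => mem_Fs.1 hω1 s (hs.trans (Nat.le_succ t))
      exact Set.mem_biUnion (Finset.mem_range.2 (Nat.lt_succ_of_le (hZle t ω)))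
        ⟨⟨hFt, rfl⟩, hω2⟩
    exact mul_le_mul_right ((measure_mono hsub).trans (measure_biUnion_finset_le _ _)) _
  refine h1.trans ?_
  -- step 2: per-k bound
  have h2 : ∀ k ∈ Finset.range (n+1),
      ∑ j ∈ Finset.range (n+1), 2⁻¹^j * μ (B k j) ≤ 8/9 * (2⁻¹^k * μ (Ak Z n t k)) := by
    intro k _
    set u := μ (Ak Z n t k ∩ U) with hu'
    set m := μ (Ak Z n t k ∩ N) with hm'
    set d := μ (Ak Z n t k ∩ D) with hd'
    -- termwise
    have hterm : ∀ j ∈ Finset.range (n+1), 2⁻¹^j * μ (B k j) ≤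
        (if j = k+1 then 2⁻¹^(k+1) * u else 0) + (if j = k then 2⁻¹^k * m else 0) +
          (if j + 1 = k then 2 * (2⁻¹^k * d) else 0) := by
      intro j _
      by_cases hjk1 : j = k + 1
      · subst hjk1
        have hBeq : B k (k+1) = Ak Z n t k ∩ U := by
          ext ω
          simp only [hB, hU, Ak, Set.mem_inter_iff, Set.mem_setOf_eq, and_congr_right_iff]
          rintro ⟨-, hz⟩
          rw [hz]
        rw [hBeq]
        simp [Nat.succ_ne_self, ← hu']
      by_cases hjk : j = k
      · subst hjk
        have hBeq : B j j = Ak Z n t j ∩ N := by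
          ext ω
          simp only [hB, hN, Ak, Set.mem_inter_iff, Set.mem_setOf_eq, and_congr_right_iff]
          rintro ⟨-, hz⟩
          rw [hz]
        rw [hBeq]
        simp [hjk1, Nat.succ_ne_self, (by omega : ¬ (j + 1 = j)), ← hm']
      by_cases hjk2 : j + 1 = k
      · have hBeq : B k j = Ak Z n t k ∩ D := by
          ext ω
          simp only [hB, hD, Ak, Set.mem_inter_iff, Set.mem_setOf_eq, and_congr_right_iff]
          rintro ⟨-, hz⟩
          rw [hz, ← hjk2]
          exact ⟨fun h => by rw [h], fun h => by omega⟩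
        rw [hBeq]
        have hpow : (2:ℝ≥0∞)⁻¹^j = 2 * 2⁻¹^k := by
          rw [← hjk2, pow_succ, mul_comm ((2:ℝ≥0∞)⁻¹^j), ← mul_assoc,
            ENNReal.mul_inv_cancel (by norm_num) (by norm_num), one_mul]
        rw [hpow]
        simp [hjk1, hjk, hjk2, ← hd', mul_assoc]
      · have hBeq : B k j = ∅ := by
          ext ω
          simp only [hB, Ak, Set.mem_inter_iff, Set.mem_setOf_eq, Set.mem_empty_iff_false,
            iff_false, not_and]
          rintro ⟨-, hz⟩ hz2
          rcases hstep t ω with h | h | h <;> omega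
        rw [hBeq]
        simp [hjk1, hjk, hjk2]
    have hsum : ∑ j ∈ Finset.range (n+1), 2⁻¹^j * μ (B k j) ≤
        2⁻¹^(k+1) * u + 2⁻¹^k * m + 2 * (2⁻¹^k * d) := by
      refine (Finset.sum_le_sum hterm).trans ?_
      rw [Finset.sum_add_distrib, Finset.sum_add_distrib]
      gcongr
      · exact sum_ite_le _ (fun a b ha hb => by omega) _
      · exact sum_ite_le _ (fun a b ha hb => by omega) _
      · exact sum_ite_le _ (fun a b ha hb => by omega) _
    refine hsum.trans ?_
    -- now the drift inequality
    have hdisjUN : Disjoint (Ak Z n t k ∩ U) (Ak Z n t k ∩ N) := by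
      refine Set.disjoint_left.2 ?_
      rintro ω ⟨-, h1⟩ ⟨-, h2⟩
      simp only [hU, hN, Set.mem_setOf_eq] at h1 h2
      omega
    have hdisjUND : Disjoint (Ak Z n t k ∩ U ∪ Ak Z n t k ∩ N) (Ak Z n t k ∩ D) := by
      refine Set.disjoint_left.2 ?_
      rintro ω (⟨-, h1⟩ | ⟨-, h1⟩) ⟨-, h2⟩ <;>
        simp only [hU, hN, hD, Set.mem_setOf_eq] at h1 h2 <;> omega
    have hcover : Ak Z n t k = (Ak Z n t k ∩ U ∪ Ak Z n t k ∩ N) ∪ Ak Z n t k ∩ D := by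
      rw [← Set.inter_union_distrib_left, ← Set.inter_union_distrib_left]
      refine (Set.inter_eq_left.2 fun ω hω => ?_).symm
      rcases hstep t ω with h | h | h
      · exact Or.inl (Or.inl h)
      · exact Or.inl (Or.inr h)
      · exact Or.inr h
    have hUmeas : MeasurableSet U := measurableSet_eq_nat (hZmeas (t+1))
      ((measurable_from_top (f := fun x : ℕ => x + 1)).comp (hZmeas t))
    have hNmeas : MeasurableSet N := measurableSet_eq_nat (hZmeas (t+1)) (hZmeas t)
    have hDmeas : MeasurableSet D := measurableSet_eq_nat (hZmeas t)
      ((measurable_from_top (f := fun x : ℕ => x + 1)).comp (hZmeas (t+1)))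
    have hAmeas := measurableSet_Ak hZmeas n t k
    have hsplit : μ (Ak Z n t k) = u + m + d := by
      rw [hu', hm', hd', ← measure_union hdisjUN (hAmeas.inter hNmeas),
        ← measure_union hdisjUND (hAmeas.inter hDmeas), ← hcover]
    -- apply hypotheses
    have hAsub : Ak Z n t k ∩ {ω | 3 * Z t ω ≤ n} = Ak Z n t k := by
      refine Set.inter_eq_left.2 fun ω hω => ?_
      exact mem_Fs.1 hω.1 t le_rfl
    have hu4 : 4/9 * μ (Ak Z n t k) ≤ u := by
      have := hup t (Ak Z n t k) (measurableSet_AkF n t k)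
      rwa [hAsub] at this
    have hd1 : d ≤ 1/9 * μ (Ak Z n t k) := hdown t (Ak Z n t k) (measurableSet_AkF n t k)
    rw [hsplit] at hu4 hd1
    have hkey := keyX u m d (measure_ne_top μ _) (measure_ne_top μ _) (measure_ne_top μ _)
      hu4 hd1
    calc 2⁻¹^(k+1) * u + 2⁻¹^k * m + 2 * (2⁻¹^k * d)
        = 2⁻¹^k * (2⁻¹ * u + m + 2 * d) := by ring
      _ ≤ 2⁻¹^k * (8/9 * (u + m + d)) := mul_le_mul_right hkey _
      _ = 8/9 * (2⁻¹^k * μ (Ak Z n t k)) := by rw [hsplit]; ring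
  calc ∑ k ∈ Finset.range (n+1), ∑ j ∈ Finset.range (n+1), 2⁻¹^j * μ (B k j)
      ≤ ∑ k ∈ Finset.range (n+1), 8/9 * (2⁻¹^k * μ (Ak Z n t k)) := Finset.sum_le_sum h2
    _ = 8/9 * Sf μ Z n t := by rw [Sf, Finset.mul_sum]


lemma Sf_zero_le (μ : Measure Ω) [IsProbabilityMeasure μ] (Z : ℕ → Ω → ℕ) (n : ℕ) :
    Sf μ Z n 0 ≤ 2 := by
  have h1 : Sf μ Z n 0 ≤ ∑ k ∈ Finset.range (n+1), 2⁻¹^k := by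
    refine Finset.sum_le_sum fun k _ => ?_
    calc 2⁻¹^k * μ (Ak Z n 0 k) ≤ 2⁻¹^k * 1 := mul_le_mul_right prob_le_one _
      _ = 2⁻¹^k := mul_one _
  refine h1.trans ?_
  refine (ENNReal.sum_le_tsum _).trans ?_
  rw [ENNReal.tsum_geometric, ENNReal.one_sub_inv_two, inv_inv]

lemma mu_Fs_le (μ : Measure Ω) [IsProbabilityMeasure μ] (Z : ℕ → Ω → ℕ) (n : ℕ)
    (hZle : ∀ t ω, Z t ω ≤ n) (t : ℕ) :
    μ (Fs Z n t) ≤ 2^n * Sf μ Z n t := by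
  have hsub : Fs Z n t ⊆ ⋃ k ∈ Finset.range (n+1), Ak Z n t k := fun ω hω =>
    Set.mem_biUnion (Finset.mem_range.2 (Nat.lt_succ_of_le (hZle t ω))) ⟨hω, rfl⟩
  refine (measure_mono hsub).trans ((measure_biUnion_finset_le _ _).trans ?_)
  rw [Sf, Finset.mul_sum]
  refine Finset.sum_le_sum fun k hk => ?_
  have h1 : (1:ℝ≥0∞) ≤ 2^n * 2⁻¹^k := by
    have : (1:ℝ≥0∞) = 2^k * 2⁻¹^k := by
      rw [← mul_pow, ENNReal.mul_inv_cancel (by norm_num) (by norm_num), one_pow]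
    rw [this]
    exact mul_le_mul_left (pow_le_pow_right₀ (by norm_num)
      (Nat.lt_succ_iff.1 (Finset.mem_range.1 hk))) _
  calc μ (Ak Z n t k) = 1 * μ (Ak Z n t k) := (one_mul _).symm
    _ ≤ 2^n * 2⁻¹^k * μ (Ak Z n t k) := mul_le_mul_left h1 _
    _ = 2^n * (2⁻¹^k * μ (Ak Z n t k)) := by rw [mul_assoc]

end Main

lemma numeric_bound (n : ℕ) :
    (2:ℝ≥0∞)^n * ((8/9)^(12*n) * 2) ≤ ENNReal.ofReal (2 * Real.exp (-(1/2) * n)) := by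
  have h89 : ((8:ℝ≥0∞)/9) = ENNReal.ofReal ((8:ℝ)/9) := by
    rw [ENNReal.ofReal_div_of_pos (by norm_num)]
    norm_num
  have h2 : (2:ℝ≥0∞) = ENNReal.ofReal (2:ℝ) := by norm_num
  rw [h89, h2, ← ENNReal.ofReal_pow (by norm_num), ← ENNReal.ofReal_pow (by norm_num),
    ← ENNReal.ofReal_mul (by positivity), ← ENNReal.ofReal_mul (by positivity)]
  refine ENNReal.ofReal_le_ofReal ?_
  have key : (2:ℝ)^n * (8/9:ℝ)^(12*n) ≤ Real.exp (-(1/2) * n) := by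
    have h1 : (2:ℝ)^n * (8/9:ℝ)^(12*n) = (2 * (8/9:ℝ)^12)^n := by
      rw [mul_pow, pow_mul]
    have h2' : Real.exp (-(1/2) * n) = (Real.exp (-(1/2)))^n := by
      rw [← Real.exp_nat_mul]
      ring_nf
    rw [h1, h2']
    refine pow_le_pow_left₀ (by positivity) ?_ n
    have h3 : (2:ℝ) * (8/9:ℝ)^12 ≤ 1/2 := by norm_num
    have h4 : (1/2:ℝ) ≤ Real.exp (-(1/2)) := by
      have := Real.add_one_le_exp (-(1/2):ℝ)
      linarith
    linarith
  calc (2:ℝ)^n * ((8/9:ℝ)^(12*n) * 2) = (2:ℝ)^n * (8/9:ℝ)^(12*n) * 2 := by ring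
    _ ≤ Real.exp (-(1/2) * n) * 2 := by gcongr
    _ = 2 * Real.exp (-(1/2) * n) := by ring

/-- A Markov-chain drift bound: if an `{0,…,n}`-valued process moves by at most
one per step, increases with probability at least `4/9` (conditioned on the
history) whenever it is at most `n/3`, and decreases with probability at most
`1/9`, then from any start it reaches `n/3` within `O(n)` steps with
probability `1 - e^{-Ω(n)}`. -/
theorem stmt10 : ∃ c C a : ℝ, 0 < c ∧ 0 < C ∧ 0 < a ∧ ∀ (n : ℕ), 3 ≤ n →
    ∀ (Ω : Type) [MeasurableSpace Ω] (μ : Measure Ω) [IsProbabilityMeasure μ]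
      (Z : ℕ → Ω → ℕ),
      (∀ t, Measurable (Z t)) →
      (∀ t ω, Z t ω ≤ n) →
      (∀ t ω, Z (t + 1) ω = Z t ω + 1 ∨ Z (t + 1) ω = Z t ω ∨ Z t ω = Z (t + 1) ω + 1) →
      (∀ (t : ℕ) (A : Set Ω),
        MeasurableSet[⨆ s ∈ Finset.range (t + 1), MeasurableSpace.comap (Z s) ⊤] A →
        (4 / 9 : ℝ≥0∞) * μ (A ∩ {ω | 3 * Z t ω ≤ n}) ≤
          μ (A ∩ {ω | 3 * Z t ω ≤ n} ∩ {ω | Z (t + 1) ω = Z t ω + 1})) →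
      (∀ (t : ℕ) (A : Set Ω),
        MeasurableSet[⨆ s ∈ Finset.range (t + 1), MeasurableSpace.comap (Z s) ⊤] A →
        μ (A ∩ {ω | Z t ω = Z (t + 1) ω + 1}) ≤ (1 / 9 : ℝ≥0∞) * μ A) →
      1 - ENNReal.ofReal (C * Real.exp (-a * n)) ≤
        μ {ω | ∃ t : ℕ, (t : ℝ) ≤ c * n ∧ (n : ℝ) / 3 ≤ Z t ω} := by
  refine ⟨12, 2, 1/2, by norm_num, by norm_num, by norm_num, ?_⟩
  intro n hn Ω mΩ μ hμ Z hZmeas hZle hstep hup hdown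
  have hdecay : ∀ t, Sf μ Z n t ≤ (8/9)^t * 2 := by
    intro t
    induction t with
    | zero => simpa using Sf_zero_le μ Z n
    | succ t ih =>
      calc Sf μ Z n (t+1) ≤ 8/9 * Sf μ Z n t :=
            step_lemma μ Z n hZmeas hZle hstep hup hdown t
        _ ≤ 8/9 * ((8/9)^t * 2) := mul_le_mul_right ih _
        _ = (8/9)^(t+1) * 2 := by rw [pow_succ]; ring
  have hFs : μ (Fs Z n (12*n)) ≤ ENNReal.ofReal (2 * Real.exp (-(1/2) * n)) := by
    refine le_trans ?_ (numeric_bound n)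
    calc μ (Fs Z n (12*n)) ≤ 2^n * Sf μ Z n (12*n) := mu_Fs_le μ Z n hZle _
      _ ≤ 2^n * ((8/9)^(12*n) * 2) := mul_le_mul_right (hdecay _) _
  set E := {ω | ∃ t : ℕ, (t:ℝ) ≤ 12 * n ∧ (n:ℝ)/3 ≤ Z t ω} with hE
  have hcompl : Eᶜ ⊆ Fs Z n (12*n) := by
    intro ω hω
    simp only [Set.mem_compl_iff, hE, Set.mem_setOf_eq, not_exists, not_and, not_le] at hω
    rw [mem_Fs]
    intro s hs
    by_contra hcon
    have hcast : (s:ℝ) ≤ 12 * n := by exact_mod_cast hs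
    have h2 := hω s hcast
    have h3 : (n:ℝ) ≤ 3 * (Z s ω : ℝ) := by exact_mod_cast (by omega : n ≤ 3 * Z s ω)
    linarith
  have hEc : μ Eᶜ ≤ ENNReal.ofReal (2 * Real.exp (-(1/2) * n)) :=
    (measure_mono hcompl).trans hFs
  have h1 : (1:ℝ≥0∞) ≤ μ E + μ Eᶜ := by
    have h2 : μ Set.univ ≤ μ E + μ Eᶜ := by
      rw [← Set.union_compl_self E]
      exact measure_union_le _ _
    simpa [measure_univ] using h2
  calc 1 - ENNReal.ofReal (2 * Real.exp (-(1/2) * (n:ℝ)))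
      ≤ 1 - μ Eᶜ := tsub_le_tsub_left hEc 1
    _ ≤ μ E := tsub_le_iff_right.2 h1
end

section
/- Let (Z_t) be a process on the integers with Z_0 = k where 24 ln n ≤ k < n/2^8, such that while k/2 ≤ Z_t ≤ 2k, Z_t increases by 1 with probability at least k/(8n) and decreases by 1 with probability at most k/(64n) at each step (otherwise unchanged). Then Z_t reaches 2k within 32n steps with probability 1 − O(1/n²). -/
open MeasureTheory ProbabilityTheory
open scoped ENNReal
noncomputable section
set_option linter.unusedSectionVars false

namespace ZAux

variable {Ω : Type} [MeasurableSpace Ω]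

/-- running step factor -/
noncomputable def run (Z : ℕ → Ω → ℕ) (t : ℕ) (ω : Ω) : ℝ≥0∞ :=
  if Z (t+1) ω = Z t ω + 1 then 2⁻¹ else if Z t ω = Z (t+1) ω + 1 then 2 else 1

/-- exited the open band by time t -/
def stopped (Z : ℕ → Ω → ℕ) (k : ℕ) (t : ℕ) (ω : Ω) : Prop :=
  ∃ s ≤ t, 2 * Z s ω < k ∨ 2 * k ≤ Z s ω

open Classical in
noncomputable def fac (Z : ℕ → Ω → ℕ) (k : ℕ) (c : ℝ≥0∞) (t : ℕ) (ω : Ω) : ℝ≥0∞ :=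
  if stopped Z k t ω then c else run Z t ω

noncomputable def W (Z : ℕ → Ω → ℕ) (k : ℕ) (c : ℝ≥0∞) : ℕ → Ω → ℝ≥0∞
  | 0 => fun _ => 1
  | (t+1) => fun ω => W Z k c t ω * fac Z k c t ω

variable {Z : ℕ → Ω → ℕ} {k : ℕ}

lemma measurable_eq_set (hZ : ∀ t, Measurable (Z t)) (s t : ℕ) (d : ℕ) :
    MeasurableSet {ω | Z s ω = Z t ω + d} := by
  have : {ω | Z s ω = Z t ω + d} = ⋃ m : ℕ, (Z t ⁻¹' {m} ∩ Z s ⁻¹' {m + d}) := by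
    ext ω
    constructor
    · intro h; exact Set.mem_iUnion.2 ⟨Z t ω, ⟨rfl, h⟩⟩
    · intro h
      obtain ⟨m, hm, hh⟩ := Set.mem_iUnion.1 h
      simp only [Set.mem_preimage, Set.mem_singleton_iff] at hm hh
      simp only [Set.mem_setOf_eq, hm, hh]
  rw [this]
  exact MeasurableSet.iUnion fun m =>
    ((hZ t MeasurableSpace.measurableSet_top).inter (hZ s MeasurableSpace.measurableSet_top))

lemma measurable_run (hZ : ∀ t, Measurable (Z t)) (t : ℕ) : Measurable (run Z t) := by
  unfold run
  apply Measurable.ite (measurable_eq_set hZ (t+1) t 1)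
  · exact measurable_const
  · exact Measurable.ite (measurable_eq_set hZ t (t+1) 1) measurable_const measurable_const

lemma measurable_stopped (hZ : ∀ t, Measurable (Z t)) (t : ℕ) :
    MeasurableSet {ω | stopped Z k t ω} := by
  have : {ω | stopped Z k t ω} = ⋃ s, ⋃ _ : s ≤ t,
      ({ω | 2 * Z s ω < k} ∪ {ω | 2 * k ≤ Z s ω}) := by
    ext ω; simp [stopped, Set.mem_iUnion]
  rw [this]
  refine MeasurableSet.iUnion fun s => MeasurableSet.iUnion fun _ => MeasurableSet.union ?_ ?_
  · exact hZ s (MeasurableSpace.measurableSet_top (s := {m | 2 * m < k}))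
  · exact hZ s (MeasurableSpace.measurableSet_top (s := {m | 2 * k ≤ m}))

lemma measurable_fac (hZ : ∀ t, Measurable (Z t)) (c : ℝ≥0∞) (t : ℕ) :
    Measurable (fac Z k c t) := by
  unfold fac
  exact Measurable.ite (measurable_stopped hZ t) measurable_const (measurable_run hZ t)

lemma measurable_W (hZ : ∀ t, Measurable (Z t)) (c : ℝ≥0∞) (t : ℕ) :
    Measurable (W Z k c t) := by
  induction t with
  | zero => exact measurable_const
  | succ t ih => exact ih.mul (measurable_fac hZ c t)

/-- dependence lemmas -/
lemma run_dep {ω ω' : Ω} (t : ℕ) (h : ∀ s ≤ t + 1, Z s ω = Z s ω') :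
    run Z t ω = run Z t ω' := by
  unfold run
  rw [h t (by omega), h (t+1) (by omega)]

lemma stopped_dep {ω ω' : Ω} (t : ℕ) (h : ∀ s ≤ t, Z s ω = Z s ω') :
    stopped Z k t ω ↔ stopped Z k t ω' := by
  unfold stopped
  constructor
  · rintro ⟨s, hs, hh⟩; exact ⟨s, hs, by rw [← h s hs]; exact hh⟩
  · rintro ⟨s, hs, hh⟩; exact ⟨s, hs, by rw [h s hs]; exact hh⟩

lemma W_dep (c : ℝ≥0∞) {ω ω' : Ω} (t : ℕ) (h : ∀ s ≤ t, Z s ω = Z s ω') :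
    W Z k c t ω = W Z k c t ω' := by
  induction t with
  | zero => rfl
  | succ t ih =>
    show W Z k c t ω * fac Z k c t ω = W Z k c t ω' * fac Z k c t ω'
    rw [ih (fun s hs => h s (by omega))]
    congr 1
    unfold fac
    by_cases hs : stopped Z k t ω
    · rw [if_pos hs, if_pos ((stopped_dep t (fun s hs' => h s (by omega))).1 hs)]
    · rw [if_neg hs, if_neg (fun hc => hs ((stopped_dep t (fun s hs' => h s (by omega))).2 hc)),
        run_dep t h]


/-- cylinder sets -/
def Cyl (Z : ℕ → Ω → ℕ) (t : ℕ) (v : Fin (t+1) → ℕ) : Set Ω :=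
  {ω | ∀ s : Fin (t+1), Z s ω = v s}

lemma measurable_Cyl (hZ : ∀ t, Measurable (Z t)) (t : ℕ) (v : Fin (t+1) → ℕ) :
    MeasurableSet (Cyl Z t v) := by
  have : Cyl Z t v = ⋂ s : Fin (t+1), Z s ⁻¹' {v s} := by
    ext ω; simp [Cyl, Set.mem_iInter]
  rw [this]
  exact MeasurableSet.iInter fun s => hZ s MeasurableSpace.measurableSet_top

lemma mem_Cyl_iff {t : ℕ} {v : Fin (t+1) → ℕ} {ω : Ω} :
    ω ∈ Cyl Z t v ↔ ∀ s : Fin (t+1), Z s ω = v s := Iff.rfl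

lemma Cyl_agree {t : ℕ} {v : Fin (t+1) → ℕ} {ω ω' : Ω}
    (hω : ω ∈ Cyl Z t v) (hω' : ω' ∈ Cyl Z t v) : ∀ s ≤ t, Z s ω = Z s ω' := by
  intro s hs
  have h1 := hω ⟨s, by omega⟩
  have h2 := hω' ⟨s, by omega⟩
  simp only at h1 h2
  rw [h1, h2]

open Classical in
noncomputable def cVal (f : Ω → ℝ≥0∞) (Z : ℕ → Ω → ℕ) (t : ℕ) (v : Fin (t+1) → ℕ) : ℝ≥0∞ :=
  if h : (Cyl Z t v).Nonempty then f h.some else 0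

/-- pointwise partition identity -/
lemma mul_eq_tsum (f g : Ω → ℝ≥0∞) (t : ℕ)
    (hdep : ∀ ω ω', (∀ s ≤ t, Z s ω = Z s ω') → f ω = f ω') (ω : Ω) :
    f ω * g ω = ∑' v : Fin (t+1) → ℕ,
      (Cyl Z t v).indicator (fun _ => cVal f Z t v) ω * g ω := by
  have hmem : ω ∈ Cyl Z t (fun s => Z s ω) := fun s => rfl
  rw [tsum_eq_single (fun s : Fin (t+1) => Z s ω) ?_]
  · rw [Set.indicator_of_mem hmem]
    congr 1
    unfold cVal
    rw [dif_pos ⟨ω, hmem⟩]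
    exact hdep _ _ (Cyl_agree hmem (Set.Nonempty.some_mem ⟨ω, hmem⟩))
  · intro v hv
    have : ω ∉ Cyl Z t v := by
      intro hc
      exact hv (funext fun s => (hc s).symm)
    rw [Set.indicator_of_notMem this, zero_mul]

lemma lintegral_mul_eq_tsum (μ : Measure Ω) (hZ : ∀ t, Measurable (Z t))
    (f g : Ω → ℝ≥0∞) (hg : Measurable g) (t : ℕ)
    (hdep : ∀ ω ω', (∀ s ≤ t, Z s ω = Z s ω') → f ω = f ω') :
    ∫⁻ ω, f ω * g ω ∂μ =
      ∑' v : Fin (t+1) → ℕ, cVal f Z t v * ∫⁻ ω in Cyl Z t v, g ω ∂μ := by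
  calc ∫⁻ ω, f ω * g ω ∂μ
      = ∫⁻ ω, ∑' v : Fin (t+1) → ℕ,
          (Cyl Z t v).indicator (fun _ => cVal f Z t v) ω * g ω ∂μ := by
        apply lintegral_congr
        intro ω
        exact mul_eq_tsum f g t hdep ω
    _ = ∑' v : Fin (t+1) → ℕ, ∫⁻ ω,
          (Cyl Z t v).indicator (fun _ => cVal f Z t v) ω * g ω ∂μ := by
        apply lintegral_tsum
        intro v
        exact (((measurable_const).indicator (measurable_Cyl hZ t v)).mul hg).aemeasurable
    _ = ∑' v : Fin (t+1) → ℕ, cVal f Z t v * ∫⁻ ω in Cyl Z t v, g ω ∂μ := by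
        congr 1
        funext v
        have : (fun ω => (Cyl Z t v).indicator (fun _ => cVal f Z t v) ω * g ω)
            = (Cyl Z t v).indicator (fun ω => cVal f Z t v * g ω) := by
          funext ω
          by_cases h : ω ∈ Cyl Z t v <;> simp [h]
        rw [this, lintegral_indicator (measurable_Cyl hZ t v),
          lintegral_const_mul _ hg]


lemma arith {u d m a p q ρ : ℝ≥0∞} (ha : a ≤ 1) (hsum : u + d + m = a)
    (hu : p * a ≤ u) (hd : d ≤ q * a) (hp : p ≤ 1) (hρ : 2 + 2*q ≤ 2*ρ + p) :
    2⁻¹ * u + 2 * d + m ≤ ρ * a := by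
  have h2 : (2:ℝ≥0∞) ≠ 0 := two_ne_zero
  have h2t : (2:ℝ≥0∞) ≠ ⊤ := ENNReal.ofNat_ne_top
  have hpa : p * a ≠ ⊤ := by
    intro hc
    have : p * a ≤ 1 := le_trans (mul_le_mul' hp ha) (by simp)
    rw [hc] at this
    exact (by simp : ¬ ((⊤:ℝ≥0∞) ≤ 1)) this
  have key : u + 4*d + 2*m + p*a ≤ 2*ρ*a + p*a := by
    calc u + 4*d + 2*m + p*a ≤ u + 4*d + 2*m + u := add_le_add_right hu _
      _ = 2*(u+d+m) + 2*d := by ring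
      _ = 2*a + 2*d := by rw [hsum]
      _ ≤ 2*a + 2*(q*a) := add_le_add_right (mul_le_mul_right hd 2) _
      _ = (2 + 2*q)*a := by ring
      _ ≤ (2*ρ + p)*a := mul_le_mul_left hρ a
      _ = 2*ρ*a + p*a := by ring
  have key2 : u + 4*d + 2*m ≤ 2*ρ*a := (ENNReal.add_le_add_iff_right hpa).1 key
  have hlhs : 2*(2⁻¹ * u + 2 * d + m) = u + 4*d + 2*m := by
    rw [mul_add, mul_add, ← mul_assoc, ENNReal.mul_inv_cancel h2 h2t, one_mul]
    ring
  have : 2*(2⁻¹ * u + 2 * d + m) ≤ 2*(ρ*a) := by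
    rw [hlhs]
    calc u + 4*d + 2*m ≤ 2*ρ*a := key2
      _ = 2*(ρ*a) := by ring
  exact (ENNReal.mul_le_mul_iff_right h2 h2t).1 this

variable {μ : Measure Ω} {p q ρ c : ℝ≥0∞}

lemma percyl [IsProbabilityMeasure μ] (hZ : ∀ t, Measurable (Z t))
    (hup : ∀ (t : ℕ) (A : Set Ω),
        MeasurableSet[⨆ s ∈ Finset.range (t + 1), MeasurableSpace.comap (Z s) ⊤] A →
        p * μ (A ∩ {ω | k ≤ 2 * Z t ω ∧ Z t ω ≤ 2 * k}) ≤
          μ (A ∩ {ω | k ≤ 2 * Z t ω ∧ Z t ω ≤ 2 * k} ∩ {ω | Z (t + 1) ω = Z t ω + 1}))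
    (hdown : ∀ (t : ℕ) (A : Set Ω),
        MeasurableSet[⨆ s ∈ Finset.range (t + 1), MeasurableSpace.comap (Z s) ⊤] A →
        μ (A ∩ {ω | k ≤ 2 * Z t ω ∧ Z t ω ≤ 2 * k} ∩ {ω | Z t ω = Z (t + 1) ω + 1}) ≤
          q * μ (A ∩ {ω | k ≤ 2 * Z t ω ∧ Z t ω ≤ 2 * k}))
    (hp : p ≤ 1) (hρ : 2 + 2*q ≤ 2*ρ + p) (hc : c ≤ ρ)
    (t : ℕ) (v : Fin (t+1) → ℕ) :
    ∫⁻ ω in Cyl Z t v, fac Z k c t ω ∂μ ≤ ρ * μ (Cyl Z t v) := by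
  set A := Cyl Z t v with hA
  rcases Set.eq_empty_or_nonempty A with hAe | ⟨ω0, hω0⟩
  · simp [hAe]
  have hAmeas : MeasurableSet A := measurable_Cyl hZ t v
  by_cases hstop : stopped Z k t ω0
  · have hfc : ∀ ω ∈ A, fac Z k c t ω = c := by
      intro ω hω
      unfold fac
      rw [if_pos ((stopped_dep t (Cyl_agree hω hω0)).2 hstop)]
    rw [setLIntegral_congr_fun hAmeas hfc,
      setLIntegral_const]
    exact mul_le_mul_left hc _
  · -- not stopped on A
    have hns : ∀ ω ∈ A, ¬ stopped Z k t ω := by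
      intro ω hω hcon
      exact hstop ((stopped_dep t (Cyl_agree hω hω0)).1 hcon)
    have hband : A ⊆ {ω | k ≤ 2 * Z t ω ∧ Z t ω ≤ 2 * k} := by
      intro ω hω
      have := hns ω hω
      unfold stopped at this
      push_neg at this
      have h2 := this t le_rfl
      exact ⟨h2.1, le_of_lt (by omega)⟩
    have hAB : A ∩ {ω | k ≤ 2 * Z t ω ∧ Z t ω ≤ 2 * k} = A :=
      Set.inter_eq_self_of_subset_left hband
    have hAF : MeasurableSet[⨆ s ∈ Finset.range (t + 1), MeasurableSpace.comap (Z s) ⊤] A := by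
      have hrepr : A = ⋂ s : Fin (t+1), Z s ⁻¹' {v s} := by
        ext ω; simp [hA, Cyl, Set.mem_iInter]
      rw [hrepr]
      refine MeasurableSet.iInter fun s => ?_
      have hle : MeasurableSpace.comap (Z s) ⊤ ≤
          ⨆ s ∈ Finset.range (t + 1), MeasurableSpace.comap (Z s) ⊤ := by
        have hmem : (s : ℕ) ∈ Finset.range (t + 1) := by
          simp [Finset.mem_range, s.is_lt]
        exact le_iSup₂ (f := fun (s : ℕ) (_ : s ∈ Finset.range (t+1)) =>
          MeasurableSpace.comap (Z s) ⊤) (s : ℕ) hmem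
      exact hle _ (MeasurableSpace.measurableSet_comap.2 ⟨{v s}, trivial, rfl⟩)
    have hu := hup t A hAF
    have hd := hdown t A hAF
    rw [hAB] at hu hd
    set Up := {ω : Ω | Z (t+1) ω = Z t ω + 1} with hUp
    set Dn := {ω : Ω | Z t ω = Z (t+1) ω + 1} with hDn
    have hUpm : MeasurableSet Up := measurable_eq_set hZ (t+1) t 1
    have hDnm : MeasurableSet Dn := measurable_eq_set hZ t (t+1) 1
    have hUD : Disjoint (A ∩ Up) (A ∩ Dn) := by
      rw [Set.disjoint_left]
      rintro ω ⟨-, h1⟩ ⟨-, h2⟩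
      simp only [hUp, hDn, Set.mem_setOf_eq] at h1 h2
      omega
    set N := A \ (Up ∪ Dn) with hN
    have hsplit : A = ((A ∩ Up) ∪ (A ∩ Dn)) ∪ N := by
      ext ω
      simp only [hN, Set.mem_union, Set.mem_inter_iff, Set.mem_diff]
      tauto
    have hdisj2 : Disjoint ((A ∩ Up) ∪ (A ∩ Dn)) N := by
      rw [Set.disjoint_left]
      rintro ω h1 h2
      rcases h1 with ⟨-, h⟩ | ⟨-, h⟩ <;> exact h2.2 (by simp [Set.mem_union]; tauto)
    have hint : ∫⁻ ω in A, fac Z k c t ω ∂μ =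
        2⁻¹ * μ (A ∩ Up) + 2 * μ (A ∩ Dn) + 1 * μ N := by
      conv_lhs => rw [hsplit]
      rw [lintegral_union (hAmeas.diff (hUpm.union hDnm)) hdisj2,
        lintegral_union (hAmeas.inter hDnm) hUD]
      congr 1
      · congr 1
        · rw [setLIntegral_congr_fun (hAmeas.inter hUpm)
            (fun ω hω => ?_), setLIntegral_const]
          unfold fac run
          rw [if_neg (hns ω hω.1), if_pos (show Z (t+1) ω = Z t ω + 1 from hω.2)]
        · rw [setLIntegral_congr_fun (hAmeas.inter hDnm)
            (fun ω hω => ?_), setLIntegral_const]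
          unfold fac run
          have h2 : Z t ω = Z (t+1) ω + 1 := hω.2
          rw [if_neg (hns ω hω.1), if_neg (by omega), if_pos h2]
      · rw [setLIntegral_congr_fun (hAmeas.diff (hUpm.union hDnm))
          (fun ω hω => ?_), setLIntegral_const]
        unfold fac run
        have h1 : ¬ (Z (t+1) ω = Z t ω + 1) := fun hc => hω.2 (Set.mem_union_left _ hc)
        have h2 : ¬ (Z t ω = Z (t+1) ω + 1) := fun hc => hω.2 (Set.mem_union_right _ hc)
        rw [if_neg (hns ω hω.1), if_neg h1, if_neg h2]
    rw [hint, one_mul]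
    have hsum : μ (A ∩ Up) + μ (A ∩ Dn) + μ N = μ A := by
      rw [← measure_union hUD (hAmeas.inter hDnm), ← measure_union hdisj2
        (hAmeas.diff (hUpm.union hDnm)), ← hsplit]
    have harith := arith (prob_le_one (μ := μ) (s := A)) hsum hu hd hp hρ
    calc 2⁻¹ * μ (A ∩ Up) + 2 * μ (A ∩ Dn) + μ N ≤ ρ * μ A := harith
      _ = ρ * μ (Cyl Z t v) := rfl


lemma lintegral_W_le [IsProbabilityMeasure μ] (hZ : ∀ t, Measurable (Z t))
    (hup : ∀ (t : ℕ) (A : Set Ω),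
        MeasurableSet[⨆ s ∈ Finset.range (t + 1), MeasurableSpace.comap (Z s) ⊤] A →
        p * μ (A ∩ {ω | k ≤ 2 * Z t ω ∧ Z t ω ≤ 2 * k}) ≤
          μ (A ∩ {ω | k ≤ 2 * Z t ω ∧ Z t ω ≤ 2 * k} ∩ {ω | Z (t + 1) ω = Z t ω + 1}))
    (hdown : ∀ (t : ℕ) (A : Set Ω),
        MeasurableSet[⨆ s ∈ Finset.range (t + 1), MeasurableSpace.comap (Z s) ⊤] A →
        μ (A ∩ {ω | k ≤ 2 * Z t ω ∧ Z t ω ≤ 2 * k} ∩ {ω | Z t ω = Z (t + 1) ω + 1}) ≤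
          q * μ (A ∩ {ω | k ≤ 2 * Z t ω ∧ Z t ω ≤ 2 * k}))
    (hp : p ≤ 1) (hρ : 2 + 2*q ≤ 2*ρ + p) (hc : c ≤ ρ) (t : ℕ) :
    ∫⁻ ω, W Z k c t ω ∂μ ≤ ρ ^ t := by
  induction t with
  | zero =>
    simp [W]
  | succ t ih =>
    have hWdep : ∀ ω ω' : Ω, (∀ s ≤ t, Z s ω = Z s ω') → W Z k c t ω = W Z k c t ω' :=
      fun ω ω' h => W_dep c t h
    have h1 : ∫⁻ ω, W Z k c (t+1) ω ∂μ =
        ∑' v : Fin (t+1) → ℕ, cVal (W Z k c t) Z t v *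
          ∫⁻ ω in Cyl Z t v, fac Z k c t ω ∂μ := by
      have : ∀ ω, W Z k c (t+1) ω = W Z k c t ω * fac Z k c t ω := fun ω => rfl
      rw [lintegral_congr this]
      exact lintegral_mul_eq_tsum μ hZ _ _ (measurable_fac hZ c t) t hWdep
    have h2 : ∫⁻ ω, W Z k c t ω ∂μ =
        ∑' v : Fin (t+1) → ℕ, cVal (W Z k c t) Z t v * μ (Cyl Z t v) := by
      have heq : ∀ ω, W Z k c t ω = W Z k c t ω * (fun _ : Ω => (1:ℝ≥0∞)) ω := by
        intro ω; simp
      rw [lintegral_congr heq,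
        lintegral_mul_eq_tsum μ hZ _ _ measurable_const t hWdep]
      congr 1
      funext v
      rw [setLIntegral_const, one_mul]
    rw [h1]
    calc ∑' v : Fin (t+1) → ℕ, cVal (W Z k c t) Z t v *
          ∫⁻ ω in Cyl Z t v, fac Z k c t ω ∂μ
        ≤ ∑' v : Fin (t+1) → ℕ, cVal (W Z k c t) Z t v * (ρ * μ (Cyl Z t v)) := by
          exact ENNReal.tsum_le_tsum fun v =>
            mul_le_mul_right (percyl hZ hup hdown hp hρ hc t v) _
      _ = ρ * ∑' v : Fin (t+1) → ℕ, cVal (W Z k c t) Z t v * μ (Cyl Z t v) := by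
          rw [← ENNReal.tsum_mul_left]
          congr 1
          funext v
          ring
      _ = ρ * ∫⁻ ω, W Z k c t ω ∂μ := by rw [← h2]
      _ ≤ ρ * ρ ^ t := mul_le_mul_right ih _
      _ = ρ ^ (t+1) := (pow_succ ρ t).symm ▸ (mul_comm ρ (ρ^t) ▸ rfl)


lemma two_pow_ne_zero (m : ℕ) : ((2:ℝ≥0∞)^m) ≠ 0 := pow_ne_zero _ two_ne_zero
lemma two_pow_ne_top (m : ℕ) : ((2:ℝ≥0∞)^m) ≠ ⊤ := ENNReal.pow_ne_top ENNReal.ofNat_ne_top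

lemma W_run (hz0 : ∀ ω, Z 0 ω = k)
    (hstep : ∀ t ω, Z (t + 1) ω = Z t ω + 1 ∨ Z (t + 1) ω = Z t ω ∨ Z t ω = Z (t + 1) ω + 1)
    (c : ℝ≥0∞) (ω : Ω) (t : ℕ) (hgood : ∀ s, s < t → ¬ stopped Z k s ω) :
    W Z k c t ω * 2 ^ (Z t ω) = (2:ℝ≥0∞) ^ k := by
  induction t with
  | zero => simp [W, hz0 ω]
  | succ t ih =>
    have ih' := ih (fun s hs => hgood s (by omega))
    have hfac : fac Z k c t ω = run Z t ω := if_neg (hgood t (by omega))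
    show W Z k c t ω * fac Z k c t ω * 2 ^ (Z (t+1) ω) = (2:ℝ≥0∞) ^ k
    rw [hfac]
    rcases hstep t ω with h | h | h
    · unfold run
      rw [if_pos h, h, pow_succ]
      calc W Z k c t ω * 2⁻¹ * (2 ^ Z t ω * 2)
          = W Z k c t ω * 2 ^ Z t ω * (2⁻¹ * 2) := by ring
        _ = (2:ℝ≥0∞)^k := by
            rw [ENNReal.inv_mul_cancel two_ne_zero ENNReal.ofNat_ne_top, mul_one, ih']
    · unfold run
      rw [if_neg (by omega), if_neg (by omega), h, mul_one, ih']
    · unfold run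
      rw [if_neg (by omega), if_pos h]
      calc W Z k c t ω * 2 * 2 ^ Z (t+1) ω
          = W Z k c t ω * (2 ^ Z (t+1) ω * 2) := by ring
        _ = W Z k c t ω * 2 ^ (Z (t+1) ω + 1) := by rw [pow_succ]
        _ = (2:ℝ≥0∞)^k := by rw [← h, ih']

lemma W_bad1 (hz0 : ∀ ω, Z 0 ω = k)
    (hstep : ∀ t ω, Z (t + 1) ω = Z t ω + 1 ∨ Z (t + 1) ω = Z t ω ∨ Z t ω = Z (t + 1) ω + 1)
    (c : ℝ≥0∞) (ω : Ω) (T : ℕ) (hω : ∀ s ≤ T, Z s ω < 2 * k ∧ k ≤ 2 * Z s ω) :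
    ((2:ℝ≥0∞) ^ k)⁻¹ ≤ W Z k c T ω := by
  have hgood : ∀ s, s < T → ¬ stopped Z k s ω := by
    rintro s hs ⟨r, hr, hcase⟩
    have := hω r (by omega)
    omega
  have hid := W_run hz0 hstep c ω T hgood
  have hZT : Z T ω ≤ 2 * k := le_of_lt (hω T le_rfl).1
  have h1 : ((2:ℝ≥0∞) ^ k)⁻¹ * 2 ^ (Z T ω) ≤ W Z k c T ω * 2 ^ (Z T ω) := by
    rw [hid]
    calc ((2:ℝ≥0∞) ^ k)⁻¹ * 2 ^ (Z T ω) ≤ ((2:ℝ≥0∞) ^ k)⁻¹ * 2 ^ (2*k) := by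
          exact mul_le_mul_right (pow_le_pow_right₀ one_le_two hZT) _
      _ = ((2:ℝ≥0∞) ^ k)⁻¹ * (2 ^ k * 2 ^ k) := by rw [two_mul, pow_add]
      _ = (((2:ℝ≥0∞) ^ k)⁻¹ * 2 ^ k) * 2 ^ k := by ring
      _ = (2:ℝ≥0∞) ^ k := by
          rw [ENNReal.inv_mul_cancel (two_pow_ne_zero k) (two_pow_ne_top k), one_mul]
  exact (ENNReal.mul_le_mul_iff_left (two_pow_ne_zero _) (two_pow_ne_top _)).1 h1

lemma W_frozen_const (ω : Ω) {s0 : ℕ} (hstop : stopped Z k s0 ω) :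
    ∀ t, s0 ≤ t → W Z k 1 t ω = W Z k 1 s0 ω := by
  intro t ht
  induction t with
  | zero =>
    have : s0 = 0 := by omega
    rw [this]
  | succ t ih =>
    rcases Nat.lt_or_ge s0 (t+1) with h | h
    · have hst : stopped Z k t ω := by
        obtain ⟨r, hr, hc⟩ := hstop
        exact ⟨r, by omega, hc⟩
      show W Z k 1 t ω * fac Z k 1 t ω = _
      rw [show fac Z k 1 t ω = 1 from if_pos hst, mul_one]
      exact ih (by omega)
    · have : s0 = t + 1 := by omega
      rw [this]

lemma W_bad2 (hz0 : ∀ ω, Z 0 ω = k)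
    (hstep : ∀ t ω, Z (t + 1) ω = Z t ω + 1 ∨ Z (t + 1) ω = Z t ω ∨ Z t ω = Z (t + 1) ω + 1)
    (ω : Ω) (T : ℕ) (hup : ∀ s ≤ T, Z s ω < 2 * k)
    (hdn : ∃ s ≤ T, 2 * Z s ω < k) :
    (2:ℝ≥0∞) ^ ((k+1)/2) ≤ W Z k 1 T ω := by
  classical
  obtain ⟨sw, hswT, hsw⟩ := hdn
  have hex : ∃ s, 2 * Z s ω < k := ⟨sw, hsw⟩
  set s0 := Nat.find hex with hs0def
  have hs0P : 2 * Z s0 ω < k := Nat.find_spec hex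
  have hs0T : s0 ≤ T := le_trans (Nat.find_min' hex hsw) hswT
  have hgood : ∀ s, s < s0 → ¬ stopped Z k s ω := by
    rintro s hs ⟨r, hr, hcase⟩
    rcases hcase with h | h
    · exact Nat.find_min hex (by omega) h
    · have := hup r (by omega)
      omega
  have hid := W_run hz0 hstep 1 ω s0 hgood
  have hconst := W_frozen_const ω (⟨s0, le_rfl, Or.inl hs0P⟩ : stopped Z k s0 ω) T hs0T
  have hexp : (k+1)/2 + Z s0 ω ≤ k := by omega
  have h1 : (2:ℝ≥0∞) ^ ((k+1)/2) * 2 ^ (Z s0 ω) ≤ W Z k 1 T ω * 2 ^ (Z s0 ω) := by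
    rw [hconst, hid, ← pow_add]
    exact pow_le_pow_right₀ one_le_two hexp
  exact (ENNReal.mul_le_mul_iff_left (two_pow_ne_zero _) (two_pow_ne_top _)).1 h1


lemma real_final (n k : ℕ) (hn : 2 ≤ n) (hk1 : 24 * Real.log n ≤ (k:ℝ))
    (hk2 : (k:ℝ) < (n:ℝ)/2^8) :
    (2:ℝ)^k * (1 - 3*((k:ℝ)/(64*(n:ℝ))))^(32*n) + ((2:ℝ)^((k+1)/2))⁻¹ ≤ 2/(n:ℝ)^2 := by
  have hn0 : (0:ℝ) < n := by exact_mod_cast (by omega : 0 < n)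
  have hn1 : (1:ℝ) < n := by exact_mod_cast (by omega : 1 < n)
  have hlogn : 0 < Real.log n := Real.log_pos hn1
  have hkn : (k:ℝ) ≤ n := by nlinarith
  have hk0 : (0:ℝ) ≤ k := Nat.cast_nonneg k
  have hlog2u : Real.log 2 < 0.7 := lt_trans Real.log_two_lt_d9 (by norm_num)
  have hlog2l : (0.6:ℝ) < Real.log 2 := lt_trans (by norm_num) Real.log_two_gt_d9
  set x : ℝ := 3*((k:ℝ)/(64*(n:ℝ))) with hx
  have hx0 : 0 ≤ x := by positivity
  have hx1 : x ≤ 1 := by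
    have hd : (k:ℝ)/(64*n) ≤ 1/64 := by
      rw [div_le_div_iff₀ (by positivity) (by norm_num)]
      nlinarith
    rw [hx]; linarith
  -- n² as exp
  have hn2exp : ((n:ℝ)^2) = Real.exp (2 * Real.log n) := by
    rw [show (2:ℝ) * Real.log n = ((2:ℕ):ℝ) * Real.log n by norm_num,
      Real.exp_nat_mul, Real.exp_log hn0]
  -- term 1
  have h1x : 1 - x ≤ Real.exp (-x) := by
    have := Real.add_one_le_exp (-x); linarith
  have hpow : (1 - x)^(32*n) ≤ Real.exp (-x)^(32*n) :=
    pow_le_pow_left₀ (by linarith) h1x _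
  have hexpn : Real.exp (-x)^(32*n) = Real.exp (((32*n:ℕ):ℝ) * (-x)) :=
    (Real.exp_nat_mul _ _).symm
  have harg : ((32*n:ℕ):ℝ) * (-x) = -(3*(k:ℝ)/2) := by
    rw [hx]
    push_cast
    field_simp
    ring
  have h2k : (2:ℝ)^k = Real.exp ((k:ℝ) * Real.log 2) := by
    rw [← Real.log_pow, Real.exp_log (by positivity)]
  have hterm1 : (2:ℝ)^k * (1 - x)^(32*n) ≤ ((n:ℝ)^2)⁻¹ := by
    calc (2:ℝ)^k * (1 - x)^(32*n)
        ≤ (2:ℝ)^k * Real.exp (-x)^(32*n) := by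
          exact mul_le_mul_of_nonneg_left hpow (by positivity)
      _ = Real.exp ((k:ℝ) * Real.log 2 + -(3*(k:ℝ)/2)) := by
          rw [h2k, hexpn, harg, ← Real.exp_add]
      _ ≤ Real.exp (-(2 * Real.log n)) := by
          apply Real.exp_le_exp.2
          nlinarith
      _ = ((n:ℝ)^2)⁻¹ := by rw [Real.exp_neg, hn2exp]
  -- term 2
  have hm : (k:ℝ) ≤ 2 * ((k+1)/2 : ℕ) := by
    exact_mod_cast (by omega : k ≤ 2 * ((k+1)/2))
  have hterm2 : ((2:ℝ)^((k+1)/2))⁻¹ ≤ ((n:ℝ)^2)⁻¹ := by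
    apply inv_anti₀ (by positivity)
    calc ((n:ℝ)^2) = Real.exp (2 * Real.log n) := hn2exp
      _ ≤ Real.exp ((((k+1)/2 : ℕ):ℝ) * Real.log 2) := by
          apply Real.exp_le_exp.2
          nlinarith
      _ = (2:ℝ)^((k+1)/2) := by
          rw [← Real.log_pow, Real.exp_log (by positivity)]
  calc (2:ℝ)^k * (1 - x)^(32*n) + ((2:ℝ)^((k+1)/2))⁻¹
      ≤ ((n:ℝ)^2)⁻¹ + ((n:ℝ)^2)⁻¹ := add_le_add hterm1 hterm2
    _ = 2/(n:ℝ)^2 := by field_simp; ring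

lemma ennreal_final (n k : ℕ) (hn : 2 ≤ n) (hk1 : 24 * Real.log n ≤ (k:ℝ))
    (hk2 : (k:ℝ) < (n:ℝ)/2^8) :
    (2:ℝ≥0∞)^k * (ENNReal.ofReal (1 - 3*((k:ℝ)/(64*(n:ℝ)))))^(32*n)
      + ((2:ℝ≥0∞)^((k+1)/2))⁻¹ ≤ ENNReal.ofReal (2/(n:ℝ)^2) := by
  have hn0 : (0:ℝ) < n := by exact_mod_cast (by omega : 0 < n)
  have hkn : (k:ℝ) ≤ n := by nlinarith
  have hbase : 0 ≤ 1 - 3*((k:ℝ)/(64*(n:ℝ))) := by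
    have hd : (k:ℝ)/(64*n) ≤ 1/64 := by
      rw [div_le_div_iff₀ (by positivity) (by norm_num)]
      nlinarith
    linarith
  have e1 : (2:ℝ≥0∞)^k = ENNReal.ofReal ((2:ℝ)^k) := by
    rw [ENNReal.ofReal_pow (by norm_num)]
    norm_num
  have e2 : ((2:ℝ≥0∞)^((k+1)/2))⁻¹ = ENNReal.ofReal (((2:ℝ)^((k+1)/2))⁻¹) := by
    rw [ENNReal.ofReal_inv_of_pos (by positivity), ENNReal.ofReal_pow (by norm_num)]
    norm_num
  rw [e1, e2, ← ENNReal.ofReal_pow hbase, ← ENNReal.ofReal_mul (by positivity),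
    ← ENNReal.ofReal_add (by positivity) (by positivity)]
  exact ENNReal.ofReal_le_ofReal (real_final n k hn hk1 hk2)

end ZAux
end

open ZAux in
/-- If a process starts at `k` with `24 ln n ≤ k < n/2⁸`, moves by at most one
per step, and while in the band `[k/2, 2k]` increases with probability at least
`k/(8n)` and decreases with probability at most `k/(64n)` (conditioned on the
history), then it reaches `2k` within `32n` steps with probability
`1 - O(1/n²)`. -/
theorem stmt11 : ∃ C : ℝ, 0 < C ∧ ∀ (n k : ℕ), 2 ≤ n →
    24 * Real.log n ≤ (k : ℝ) → (k : ℝ) < (n : ℝ) / 2 ^ 8 →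
    ∀ (Ω : Type) [MeasurableSpace Ω] (μ : Measure Ω) [IsProbabilityMeasure μ]
      (Z : ℕ → Ω → ℕ),
      (∀ t, Measurable (Z t)) →
      (∀ ω, Z 0 ω = k) →
      (∀ t ω, Z (t + 1) ω = Z t ω + 1 ∨ Z (t + 1) ω = Z t ω ∨ Z t ω = Z (t + 1) ω + 1) →
      (∀ (t : ℕ) (A : Set Ω),
        MeasurableSet[⨆ s ∈ Finset.range (t + 1), MeasurableSpace.comap (Z s) ⊤] A →
        ((k : ℝ≥0∞) / (8 * n)) * μ (A ∩ {ω | k ≤ 2 * Z t ω ∧ Z t ω ≤ 2 * k}) ≤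
          μ (A ∩ {ω | k ≤ 2 * Z t ω ∧ Z t ω ≤ 2 * k} ∩ {ω | Z (t + 1) ω = Z t ω + 1})) →
      (∀ (t : ℕ) (A : Set Ω),
        MeasurableSet[⨆ s ∈ Finset.range (t + 1), MeasurableSpace.comap (Z s) ⊤] A →
        μ (A ∩ {ω | k ≤ 2 * Z t ω ∧ Z t ω ≤ 2 * k} ∩ {ω | Z t ω = Z (t + 1) ω + 1}) ≤
          ((k : ℝ≥0∞) / (64 * n)) * μ (A ∩ {ω | k ≤ 2 * Z t ω ∧ Z t ω ≤ 2 * k})) →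
      1 - ENNReal.ofReal (C / (n : ℝ) ^ 2) ≤
        μ {ω | ∃ t ≤ 32 * n, 2 * k ≤ Z t ω} := by
  refine ⟨2, by norm_num, ?_⟩
  intro n k hn hk1 hk2 Ω _ μ _ Z hZmeas hz0 hstep hup hdown
  have hnn : 0 < n := by omega
  have hn0R : (0:ℝ) < n := by exact_mod_cast hnn
  have hknR : (k:ℝ) < n := by nlinarith
  have hkn : k < n := by exact_mod_cast hknR
  -- scalar facts in ℝ≥0∞
  set u : ℝ≥0∞ := (k:ℝ≥0∞)/(64*(n:ℝ≥0∞)) with hu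
  have hu_eq : u = ENNReal.ofReal ((k:ℝ)/(64*(n:ℝ))) := by
    rw [hu, ENNReal.ofReal_div_of_pos (by positivity), ENNReal.ofReal_natCast,
      ENNReal.ofReal_mul (by norm_num), ENNReal.ofReal_natCast]
    norm_num
  have h3u : 3*u ≤ 2⁻¹ := by
    have h1 : 3*u = ((3*k:ℕ):ℝ≥0∞)/(64*(n:ℝ≥0∞)) := by
      rw [hu, ← mul_div_assoc]
      push_cast
      ring_nf
    rw [h1]
    apply ENNReal.div_le_of_le_mul
    have h2 : (2:ℝ≥0∞)⁻¹ * (64*(n:ℝ≥0∞)) = 32*(n:ℝ≥0∞) := by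
      rw [show (64:ℝ≥0∞) = 2*32 by norm_num, ← mul_assoc, ← mul_assoc,
        ENNReal.inv_mul_cancel two_ne_zero ENNReal.ofNat_ne_top, one_mul]
    rw [h2]
    calc ((3*k:ℕ):ℝ≥0∞) ≤ ((32*n:ℕ):ℝ≥0∞) := Nat.cast_le.2 (by omega)
      _ = 32*(n:ℝ≥0∞) := by push_cast; ring
  have hu1 : u ≤ 1 := le_trans (le_trans (by
      calc u = 1*u := (one_mul u).symm
        _ ≤ 3*u := mul_le_mul_left (by norm_num) u) h3u) (by norm_num)
  set ρd : ℝ≥0∞ := 1 - 3*u with hρd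
  have hρd_eq : ρd = ENNReal.ofReal (1 - 3*((k:ℝ)/(64*(n:ℝ)))) := by
    rw [ENNReal.ofReal_sub _ (by positivity), ENNReal.ofReal_one,
      ENNReal.ofReal_mul (by norm_num), ← hu_eq, hρd]
    norm_num
  have hp8 : (k:ℝ≥0∞)/(8*(n:ℝ≥0∞)) = 8 * u := by
    rw [hu, ← mul_div_assoc, show (64:ℝ≥0∞)*(n:ℝ≥0∞) = 8*(8*(n:ℝ≥0∞)) by ring,
      ENNReal.mul_div_mul_left _ _ (by norm_num) (by norm_num)]
  have hp1 : (k:ℝ≥0∞)/(8*(n:ℝ≥0∞)) ≤ 1 := by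
    apply ENNReal.div_le_of_le_mul
    rw [one_mul]
    calc ((k:ℕ):ℝ≥0∞) ≤ ((8*n:ℕ):ℝ≥0∞) := Nat.cast_le.2 (by omega)
      _ = 8*(n:ℝ≥0∞) := by push_cast; ring
  have hcancel : (1 - 3*u) + 3*u = 1 :=
    tsub_add_cancel_of_le (le_trans h3u (by norm_num))
  have hρ_drift : 2 + 2*((k:ℝ≥0∞)/(64*(n:ℝ≥0∞))) ≤ 2*ρd + (k:ℝ≥0∞)/(8*(n:ℝ≥0∞)) := by
    rw [hp8, ← hu, hρd]
    apply le_of_eq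
    calc 2 + 2*u = 2*((1-3*u) + 3*u) + 2*u := by rw [hcancel]; ring
      _ = 2*(1-3*u) + 8*u := by ring
  have hρ_froz : 2 + 2*((k:ℝ≥0∞)/(64*(n:ℝ≥0∞))) ≤ 2*1 + (k:ℝ≥0∞)/(8*(n:ℝ≥0∞)) := by
    rw [hp8, ← hu, mul_one]
    exact add_le_add le_rfl (mul_le_mul_left (by norm_num) u)
  have hc_drift : (2:ℝ≥0∞)⁻¹ ≤ ρd := by
    rw [hρd]
    refine ENNReal.le_sub_of_add_le_left (by
      intro hc
      have := le_trans (le_of_eq hc.symm) h3u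
      simp at this) ?_
    calc 3*u + 2⁻¹ ≤ 2⁻¹ + 2⁻¹ := add_le_add h3u le_rfl
      _ = 1 := ENNReal.inv_two_add_inv_two
  -- supermartingale bounds
  have hdriftint : ∫⁻ ω, W Z k 2⁻¹ (32*n) ω ∂μ ≤ ρd ^ (32*n) :=
    lintegral_W_le hZmeas hup hdown hp1 hρ_drift hc_drift (32*n)
  have hfrozint : ∫⁻ ω, W Z k 1 (32*n) ω ∂μ ≤ 1 := by
    calc ∫⁻ ω, W Z k 1 (32*n) ω ∂μ ≤ 1 ^ (32*n) :=
        lintegral_W_le hZmeas hup hdown hp1 hρ_froz le_rfl (32*n)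
      _ = 1 := one_pow _
  -- bad events
  set Bad1 : Set Ω := {ω | ∀ s ≤ 32*n, Z s ω < 2*k ∧ k ≤ 2*Z s ω} with hBad1
  set Bad2 : Set Ω := {ω | (∀ s ≤ 32*n, Z s ω < 2*k) ∧ ∃ s ≤ 32*n, 2*Z s ω < k} with hBad2
  have hμ1 : μ Bad1 ≤ 2^k * ρd ^ (32*n) := by
    have hsub : Bad1 ⊆ {ω | ((2:ℝ≥0∞)^k)⁻¹ ≤ W Z k 2⁻¹ (32*n) ω} :=
      fun ω hω => W_bad1 hz0 hstep 2⁻¹ ω (32*n) hω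
    have hmark : ((2:ℝ≥0∞)^k)⁻¹ * μ Bad1 ≤ ρd ^ (32*n) :=
      le_trans (mul_le_mul_right (measure_mono hsub) _)
        (le_trans (mul_meas_ge_le_lintegral₀
          (measurable_W hZmeas 2⁻¹ (32*n)).aemeasurable _) hdriftint)
    calc μ Bad1 = (2:ℝ≥0∞)^k * (((2:ℝ≥0∞)^k)⁻¹ * μ Bad1) := by
          rw [← mul_assoc, ENNReal.mul_inv_cancel (two_pow_ne_zero k) (two_pow_ne_top k),
            one_mul]
      _ ≤ 2^k * ρd ^ (32*n) := mul_le_mul_right hmark _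
  have hμ2 : μ Bad2 ≤ ((2:ℝ≥0∞)^((k+1)/2))⁻¹ := by
    have hsub : Bad2 ⊆ {ω | (2:ℝ≥0∞)^((k+1)/2) ≤ W Z k 1 (32*n) ω} :=
      fun ω hω => W_bad2 hz0 hstep ω (32*n) hω.1 hω.2
    have hmark : (2:ℝ≥0∞)^((k+1)/2) * μ Bad2 ≤ 1 :=
      le_trans (mul_le_mul_right (measure_mono hsub) _)
        (le_trans (mul_meas_ge_le_lintegral₀
          (measurable_W hZmeas 1 (32*n)).aemeasurable _) hfrozint)
    calc μ Bad2 = ((2:ℝ≥0∞)^((k+1)/2))⁻¹ * ((2:ℝ≥0∞)^((k+1)/2) * μ Bad2) := by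
          rw [← mul_assoc, ENNReal.inv_mul_cancel (two_pow_ne_zero _) (two_pow_ne_top _),
            one_mul]
      _ ≤ ((2:ℝ≥0∞)^((k+1)/2))⁻¹ * 1 := mul_le_mul_right hmark _
      _ = ((2:ℝ≥0∞)^((k+1)/2))⁻¹ := mul_one _
  -- success set
  set S : Set Ω := {ω | ∃ t ≤ 32 * n, 2 * k ≤ Z t ω} with hS
  have hSm : MeasurableSet S := by
    have : S = ⋃ t, ⋃ _ : t ≤ 32*n, {ω | 2*k ≤ Z t ω} := by
      ext ω; simp [hS]
    rw [this]
    exact MeasurableSet.iUnion fun t => MeasurableSet.iUnion fun _ =>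
      hZmeas t MeasurableSpace.measurableSet_top
  have hcover : Sᶜ ⊆ Bad1 ∪ Bad2 := by
    intro ω hω
    simp only [hS, Set.mem_compl_iff, Set.mem_setOf_eq, not_exists, not_le] at hω
    push_neg at hω
    by_cases hb : ∃ s ≤ 32*n, 2*Z s ω < k
    · exact Or.inr ⟨fun s hs => hω s hs, hb⟩
    · push_neg at hb
      exact Or.inl fun s hs => ⟨hω s hs, hb s hs⟩
  have hFail : μ Sᶜ ≤ ENNReal.ofReal (2/(n:ℝ)^2) := by
    calc μ Sᶜ ≤ μ (Bad1 ∪ Bad2) := measure_mono hcover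
      _ ≤ μ Bad1 + μ Bad2 := measure_union_le _ _
      _ ≤ 2^k * ρd ^ (32*n) + ((2:ℝ≥0∞)^((k+1)/2))⁻¹ := add_le_add hμ1 hμ2
      _ ≤ ENNReal.ofReal (2/(n:ℝ)^2) := by
          rw [hρd_eq]
          exact ennreal_final n k hn hk1 hk2
  have hcompl : μ S = 1 - μ Sᶜ := by
    have := prob_compl_eq_one_sub (μ := μ) hSm.compl
    rwa [compl_compl] at this
  calc 1 - ENNReal.ofReal (2 / (n:ℝ)^2) ≤ 1 - μ Sᶜ := tsub_le_tsub_left hFail 1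
    _ = μ S := hcompl.symm
end
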